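/- Sub-additivity of the totient for mixed expansions: let σ : Fin l → Fin n with l ≥ 1, let M = E_{σ(1)} ∘ ⋯ ∘ E_{σ(l)} be the mixed expansion operator, let S be a tuple, and for each i let Φ_i be the least positive integer with E_{σ(i)}^{Φ_i} S = 0. Then there is a least positive integer m with M^m S = 0, and it satisfies m ≤ min_i Φ_i; in particular l · m ≤ ∑_{i=1}^{l} Φ_i, i.e. Φ[M, S] ≤ (1/l) ∑_i Φ_i. -/

import Mathlib

open MvPolynomial MeasureTheory

/-- The expansion operator in direction `i`: the paper's composite map
`(γ⁻¹ ∘ β ∘ γ ∘ ∇)_{[x_i]}`, sending a tuple `S` to the tuple whose `k`-th entry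
is the sum of the partial derivatives (in direction `i`) of all other entries. -/
noncomputable def expandDir {s n : ℕ} (i : Fin n) (S : Fin s → MvPolynomial (Fin n) ℝ) :
    Fin s → MvPolynomial (Fin n) ℝ :=
  fun k => ∑ t ∈ Finset.univ.filter (fun t => t ≠ k), MvPolynomial.pderiv i (S t)

/-- The mixed expansion operator `M = E_{σ 0} ∘ E_{σ 1} ∘ ⋯ ∘ E_{σ (l-1)}`. -/
noncomputable def mixedExpand {s n l : ℕ} (σ : Fin l → Fin n) :
    (Fin s → MvPolynomial (Fin n) ℝ) → (Fin s → MvPolynomial (Fin n) ℝ) :=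
  (List.ofFn (fun i => expandDir (s := s) (σ i))).foldr (fun f g => f ∘ g) id

/-- sub-additivity of the totient for mixed expansions: the totient of the
mixed expansion exists, is at most each directional totient, and hence at most their
average. -/
lemma my_pderiv_comm {n : ℕ} (i j : Fin n) (p : MvPolynomial (Fin n) ℝ) :
    pderiv i (pderiv j p) = pderiv j (pderiv i p) := by
  induction p using MvPolynomial.induction_on' with
  | monomial u a =>
    rcases eq_or_ne i j with rfl | hij
    · rfl
    · simp only [pderiv_monomial]
      rw [Finsupp.tsub_apply, Finsupp.tsub_apply, Finsupp.single_apply,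
        Finsupp.single_apply, if_neg hij, if_neg hij.symm]
      congr 1
      · rw [tsub_tsub, tsub_tsub, add_comm]
      · push_cast [Nat.sub_zero]
        ring
  | add p q hp hq => simp [hp, hq]

lemma expandDir_zero {s n : ℕ} (i : Fin n) : expandDir (s := s) i 0 = 0 := by
  funext k; simp [expandDir]

lemma expandDir_comm {s n : ℕ} (i j : Fin n) :
    Function.Commute (expandDir (s := s) i) (expandDir (s := s) j) := by
  intro S
  funext k
  simp only [Function.comp_apply, expandDir, map_sum]
  exact Finset.sum_congr rfl fun t _ => Finset.sum_congr rfl fun u _ => my_pderiv_comm i j (S u)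

lemma commute_foldr {α : Type*} (g : α → α) (L : List (α → α))
    (h : ∀ f ∈ L, Function.Commute g f) :
    Function.Commute g (L.foldr (fun f g => f ∘ g) id) := by
  induction L with
  | nil => exact fun x => rfl
  | cons f L ih =>
    exact (h f (List.mem_cons_self)).comp_right (ih fun f hf => h f (List.mem_cons_of_mem _ hf))

lemma foldr_zero_apply {s n : ℕ}
    (L : List ((Fin s → MvPolynomial (Fin n) ℝ) → (Fin s → MvPolynomial (Fin n) ℝ)))
    (h0 : ∀ f ∈ L, f 0 = 0) :
    (L.foldr (fun f g => f ∘ g) id) 0 = 0 := by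
  induction L with
  | nil => rfl
  | cons f L ihL =>
    simp only [List.foldr_cons, Function.comp_apply,
      ihL (fun f hf => h0 f (List.mem_cons_of_mem _ hf))]
    exact h0 f (List.mem_cons_self)

lemma foldr_iter_zero {s n : ℕ} (L : List ((Fin s → MvPolynomial (Fin n) ℝ) → (Fin s → MvPolynomial (Fin n) ℝ)))
    (h0 : ∀ f ∈ L, f 0 = 0) (m : ℕ) :
    (L.foldr (fun f g => f ∘ g) id)^[m] 0 = 0 := by
  induction m with
  | zero => rfl
  | succ m ih => rw [Function.iterate_succ_apply', ih, foldr_zero_apply L h0]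

lemma key {s n : ℕ} (L : List ((Fin s → MvPolynomial (Fin n) ℝ) → (Fin s → MvPolynomial (Fin n) ℝ)))
    (hcomm : ∀ f ∈ L, ∀ g ∈ L, Function.Commute f g)
    (h0 : ∀ f ∈ L, f 0 = 0)
    (g : (Fin s → MvPolynomial (Fin n) ℝ) → (Fin s → MvPolynomial (Fin n) ℝ)) (hg : g ∈ L)
    (m : ℕ) (S : Fin s → MvPolynomial (Fin n) ℝ) (hgm : g^[m] S = 0) :
    (L.foldr (fun f g => f ∘ g) id)^[m] S = 0 := by
  induction L with
  | nil => exact absurd hg (List.not_mem_nil)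
  | cons f L ih =>
    have hcomm' : ∀ a ∈ L, ∀ b ∈ L, Function.Commute a b :=
      fun a ha b hb => hcomm a (List.mem_cons_of_mem _ ha) b (List.mem_cons_of_mem _ hb)
    have h0' : ∀ a ∈ L, a 0 = 0 := fun a ha => h0 a (List.mem_cons_of_mem _ ha)
    have hcf : Function.Commute f (L.foldr (fun f g => f ∘ g) id) :=
      commute_foldr f L (fun a ha => hcomm f (List.mem_cons_self) a (List.mem_cons_of_mem _ ha))
    rw [List.foldr_cons, hcf.comp_iterate]
    rcases List.mem_cons.mp hg with rfl | hgL
    · -- g = f : use commutation to apply g^[m] first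
      have : (L.foldr (fun f g => f ∘ g) id)^[m] (g^[m] S) = 0 := by
        rw [hgm]; exact foldr_iter_zero L h0' m
      rw [Function.comp_apply, hcf.iterate_iterate m m S]
      exact this
    · rw [Function.comp_apply, ih hcomm' h0' hgL]
      -- f^[m] 0 = 0
      have : f 0 = 0 := h0 f (List.mem_cons_self)
      clear * - this
      induction m with
      | zero => rfl
      | succ m ih => rw [Function.iterate_succ_apply', ih, this]


theorem totient_mixed_subadd (s n l : ℕ) (hl : 1 ≤ l) (σ : Fin l → Fin n)
    (S : Fin s → MvPolynomial (Fin n) ℝ) (Φ : Fin l → ℕ)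
    (hΦ : ∀ i : Fin l, IsLeast {m | 0 < m ∧ (expandDir (σ i))^[m] S = 0} (Φ i)) :
    ∃ m : ℕ, IsLeast {m' | 0 < m' ∧ (mixedExpand σ)^[m'] S = 0} m ∧
      (∀ i : Fin l, m ≤ Φ i) ∧ l * m ≤ ∑ i : Fin l, Φ i := by
  classical
  set L : List ((Fin s → MvPolynomial (Fin n) ℝ) → (Fin s → MvPolynomial (Fin n) ℝ)) :=
    List.ofFn (fun i => expandDir (s := s) (σ i)) with hL
  have hmem : ∀ f ∈ L, ∃ i : Fin l, f = expandDir (σ i) := by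
    intro f hf
    obtain ⟨i, hi⟩ := (List.mem_ofFn).mp hf
    exact ⟨i, hi.symm⟩
  have hcomm : ∀ f ∈ L, ∀ g ∈ L, Function.Commute f g := by
    intro f hf g hg
    obtain ⟨i, rfl⟩ := hmem f hf
    obtain ⟨j, rfl⟩ := hmem g hg
    exact expandDir_comm _ _
  have h0 : ∀ f ∈ L, f 0 = 0 := by
    intro f hf
    obtain ⟨i, rfl⟩ := hmem f hf
    exact expandDir_zero _
  have hME : mixedExpand σ = L.foldr (fun f g => f ∘ g) id := rfl
  have hPhi_mem : ∀ i : Fin l, Φ i ∈ {m' | 0 < m' ∧ (mixedExpand σ)^[m'] S = 0} := by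
    intro i
    refine ⟨(hΦ i).1.1, ?_⟩
    rw [hME]
    exact key L hcomm h0 (expandDir (σ i))
      ((List.mem_ofFn).mpr ⟨i, rfl⟩) (Φ i) S (hΦ i).1.2
  have i0 : Fin l := ⟨0, hl⟩
  have hne : ∃ m', m' ∈ {m' | 0 < m' ∧ (mixedExpand σ)^[m'] S = 0} := ⟨Φ i0, hPhi_mem i0⟩
  obtain ⟨m, hmem', hmin⟩ := Nat.lt_wfRel.wf.has_min _ hne
  have hleast : IsLeast {m' | 0 < m' ∧ (mixedExpand σ)^[m'] S = 0} m :=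
    ⟨hmem', fun b hb => not_lt.mp (hmin b hb)⟩
  have hle : ∀ i : Fin l, m ≤ Φ i := fun i => hleast.2 (hPhi_mem i)
  refine ⟨m, hleast, hle, ?_⟩
  calc l * m = ∑ _i : Fin l, m := by
        rw [Finset.sum_const, Finset.card_univ, Fintype.card_fin, smul_eq_mul]
    _ ≤ ∑ i : Fin l, Φ i := Finset.sum_le_sum fun i _ => hle i
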